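/- Let ε, k_x, ν > 0, k_y ≠ 0, and let ĝ ∈ L²(ℝ, ℂ) be such that η ↦ (1+η²)^{−1/4} ĝ(η) is in L². Define for x ≥ 0 and η ∈ ℝ: û(x,η) = 2ĝ(η)·e^{R_−(iη)x} / (1 + √(1 − (2εk_y/k_x²)η + 2iεν k_y²/k_x²)), with R_− as in the half-space problem. Then for every x ≥ 0, ∫_ℝ |û(x,η)|² dη ≤ C² ∫_ℝ |ĝ(η)|² (1+η²)^{−1/2} dη, where C = 2√(1 + k_x²/(ε|k_y|)). -/

import Mathlib

open Complex MeasureTheory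

lemma sqrt_props (w : ℂ) (hw : 0 < w.im) :
    0 ≤ (w ^ ((1:ℂ)/2)).re ∧ 0 ≤ (w ^ ((1:ℂ)/2)).im ∧
    w ^ ((1:ℂ)/2) * w ^ ((1:ℂ)/2) = w := by
  have hw0 : w ≠ 0 := fun h => by simp [h] at hw
  have harg0 : 0 ≤ w.arg := Complex.arg_nonneg_iff.mpr hw.le
  have hargpi : w.arg ≤ Real.pi := Complex.arg_le_pi w
  have hmul : w ^ ((1:ℂ)/2) * w ^ ((1:ℂ)/2) = w := by
    rw [← Complex.cpow_add _ _ hw0]; norm_num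
  refine ⟨?_, ?_, hmul⟩
  · rw [Complex.cpow_def_of_ne_zero hw0, Complex.exp_re]
    have him : (Complex.log w * ((1:ℂ)/2)).im = w.arg / 2 := by
      simp [Complex.log_im]; ring
    rw [him]
    have : 0 ≤ Real.cos (w.arg / 2) := by
      apply Real.cos_nonneg_of_mem_Icc
      constructor <;> [linarith [Real.pi_pos]; linarith]
    positivity
  · rw [Complex.cpow_def_of_ne_zero hw0, Complex.exp_im]
    have him : (Complex.log w * ((1:ℂ)/2)).im = w.arg / 2 := by
      simp [Complex.log_im]; ring
    rw [him]
    have : 0 ≤ Real.sin (w.arg / 2) := by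
      apply Real.sin_nonneg_of_nonneg_of_le_pi <;> linarith [Real.pi_pos]
    positivity

lemma key_ineq (a K sre A η : ℝ) (ha : a ≠ 0) (hK : K = 1 + 2/|a|)
    (hs : 0 ≤ sre) (hA : |1 - a*η| ≤ A) :
    Real.sqrt (1+η^2) ≤ K * (1 + 2*sre + A) := by
  have hapos : 0 < |a| := abs_pos.mpr ha
  have h1 : Real.sqrt (1+η^2) ≤ 1 + |η| := by
    rw [show (1:ℝ)+η^2 = 1+|η|^2 by rw [_root_.sq_abs]]
    calc Real.sqrt (1+|η|^2) ≤ Real.sqrt ((1+|η|)^2) := by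
          apply Real.sqrt_le_sqrt; nlinarith [abs_nonneg η]
      _ = 1+|η| := Real.sqrt_sq (by positivity)
  have hK1 : 1 ≤ K := by rw [hK]; nlinarith [div_nonneg (by norm_num : (0:ℝ) ≤ 2) hapos.le]
  have hA0 : 0 ≤ A := le_trans (abs_nonneg _) hA
  have hKa : K * |a| = |a| + 2 := by rw [hK]; field_simp
  rcases le_or_gt (|a| * |η|) 2 with h | h
  · have hη : |η| ≤ 2/|a| := by rw [le_div_iff₀ hapos]; linarith [h, mul_comm (|a|) (|η|)]
    nlinarith [abs_nonneg η]
  · have h2 : |a| * |η| - 1 ≤ A := by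
      have := abs_sub_abs_le_abs_sub (a*η) 1
      rw [abs_mul, abs_one, abs_sub_comm] at this
      linarith
    nlinarith [mul_le_mul_of_nonneg_left h2 (by linarith : (0:ℝ) ≤ K),
      abs_nonneg η, mul_nonneg (by linarith : (0:ℝ) ≤ K) hs]

set_option maxHeartbeats 1000000 in
theorem stmt_8 (ε kx ky ν : ℝ) (hε : 0 < ε) (hkx : 0 < kx) (hky : ky ≠ 0) (hν : 0 < ν)
    (g : ℝ → ℂ) (hg : MemLp g 2 volume)
    (hg' : Integrable (fun η : ℝ => ‖g η‖ ^ 2 * (1 + η ^ 2) ^ (-(1 : ℝ) / 2)) volume)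
    (Rminus : ℝ → ℂ)
    (hm : ∀ η : ℝ, Rminus η = I * (kx / ky : ℝ) * (η : ℂ)
      - I * ((kx / (ε * ky ^ 2) : ℝ) : ℂ) *
      (1 - ((1 : ℂ) - ((2 * ε * ky / kx ^ 2 : ℝ) : ℂ) * (η : ℂ)
        + 2 * (ν : ℂ) * (ε : ℂ) * (ky : ℂ) ^ 2 / (kx : ℂ) ^ 2 * I) ^ ((1 : ℂ) / 2)))
    (u : ℝ → ℝ → ℂ)
    (hu : ∀ x η, u x η = 2 * g η * Complex.exp (Rminus η * (x : ℂ)) /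
      (1 + ((1 : ℂ) - ((2 * ε * ky / kx ^ 2 : ℝ) : ℂ) * (η : ℂ)
        + 2 * (ε : ℂ) * (ν : ℂ) * (ky : ℂ) ^ 2 / (kx : ℂ) ^ 2 * I) ^ ((1 : ℂ) / 2)))
    (C : ℝ) (hC : C = 2 * Real.sqrt (1 + kx ^ 2 / (ε * |ky|))) :
    ∀ x : ℝ, 0 ≤ x →
      ∫ η : ℝ, ‖u x η‖ ^ 2
        ≤ C ^ 2 * ∫ η : ℝ, ‖g η‖ ^ 2 * (1 + η ^ 2) ^ (-(1 : ℝ) / 2) := by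
  intro x hx
  have hky' : 0 < |ky| := abs_pos.mpr hky
  set K : ℝ := 1 + kx^2/(ε*|ky|) with hKdef
  have hKpos : 0 < K := by rw [hKdef]; positivity
  have hC2 : C^2 = 4*K := by
    rw [hC, mul_pow, Real.sq_sqrt (by positivity)]; ring
  set a : ℝ := 2*ε*ky/kx^2 with hadef
  have habs_a : |a| = 2*ε*|ky|/kx^2 := by
    rw [hadef, _root_.abs_div, _root_.abs_mul, _root_.abs_mul, _root_.abs_of_pos hε,
      _root_.abs_of_nonneg (sq_nonneg kx)]
    norm_num
  have ha_ne : a ≠ 0 := by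
    rw [← abs_pos, habs_a]; positivity
  have hKeq : K = 1 + 2/|a| := by
    rw [hKdef, habs_a]; field_simp
  set b : ℝ := 2*ε*ν*ky^2/kx^2 with hbdef
  have hb : 0 < b := by rw [hbdef]; positivity
  -- pointwise estimate
  have hpt : ∀ η : ℝ, ‖u x η‖^2 ≤ C^2 * (‖g η‖^2 * (1+η^2) ^ (-(1:ℝ)/2)) := by
    intro η
    set w : ℂ := (1 : ℂ) - ((2 * ε * ky / kx ^ 2 : ℝ) : ℂ) * (η : ℂ)
        + 2 * (ε : ℂ) * (ν : ℂ) * (ky : ℂ) ^ 2 / (kx : ℂ) ^ 2 * I with hwdef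
    have hweq : w = ((1 - a*η : ℝ) : ℂ) + ((b : ℝ) : ℂ) * I := by
      rw [hwdef, hadef, hbdef]; push_cast
      field_simp
    have hwre : w.re = 1 - a*η := by rw [hweq]; simp
    have hwim : w.im = b := by rw [hweq]; simp
    set s : ℂ := w ^ ((1:ℂ)/2) with hsdef
    obtain ⟨hsre, hsim, hss⟩ := sqrt_props w (by rw [hwim]; exact hb)
    rw [← hsdef] at hsre hsim hss
    have habs_s : ‖s‖^2 = ‖w‖ := by
      rw [sq, ← norm_mul, hss]
    -- denominator
    have hden : ‖(1 : ℂ) + s‖^2 = 1 + 2*s.re + ‖w‖ := by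
      rw [Complex.sq_norm, Complex.normSq_apply]
      simp only [Complex.add_re, Complex.add_im, Complex.one_re, Complex.one_im]
      have : s.re^2 + s.im^2 = ‖w‖ := by
        rw [← habs_s, Complex.sq_norm, Complex.normSq_apply]; ring
      nlinarith [this]
    have hden1 : 1 ≤ ‖(1 : ℂ) + s‖^2 := by
      rw [hden]
      linarith [norm_nonneg w]
    have hden_ne : (1 : ℂ) + s ≠ 0 := by
      intro h
      rw [h] at hden1; simp at hden1; linarith
    have hdenpos : 0 < ‖(1 : ℂ) + s‖ := norm_pos_iff.mpr hden_ne
    -- exponential bound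
    have hRre : (Rminus η * (x:ℂ)).re = -(kx/(ε*ky^2) * s.im) * x := by
      rw [hm η]
      have hbase : ((1 : ℂ) - ((2 * ε * ky / kx ^ 2 : ℝ) : ℂ) * (η : ℂ)
        + 2 * (ν : ℂ) * (ε : ℂ) * (ky : ℂ) ^ 2 / (kx : ℂ) ^ 2 * I) = w := by
        rw [hwdef]; ring
      rw [hbase, ← hsdef]
      simp only [Complex.mul_re, Complex.mul_im, Complex.sub_re, Complex.sub_im,
        Complex.add_re, Complex.add_im, Complex.I_re, Complex.I_im,
        Complex.ofReal_re, Complex.ofReal_im, Complex.one_re, Complex.one_im]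
      ring
    have hexp : ‖Complex.exp (Rminus η * (x:ℂ))‖ ≤ 1 := by
      rw [Complex.norm_exp, hRre, Real.exp_le_one_iff]
      have hc : 0 < kx/(ε*ky^2) := by positivity
      nlinarith [mul_nonneg (mul_nonneg hc.le hsim) hx]
    -- norm of u
    have hnu : ‖u x η‖ ≤ 2*‖g η‖/‖(1:ℂ)+s‖ := by
      rw [hu x η, ← hwdef, ← hsdef, norm_div, norm_mul, norm_mul]
      have h2 : ‖(2:ℂ)‖ = 2 := by norm_num
      rw [h2]
      calc 2*‖g η‖*‖Complex.exp (Rminus η * (x:ℂ))‖ / ‖(1:ℂ)+s‖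
          ≤ 2*‖g η‖*1 / ‖(1:ℂ)+s‖ := by gcongr
        _ = 2*‖g η‖/‖(1:ℂ)+s‖ := by rw [mul_one]
    -- key inequality
    have hq0 : 0 < Real.sqrt (1+η^2) := Real.sqrt_pos.mpr (by positivity)
    have hkey : Real.sqrt (1+η^2) ≤ K * ‖(1:ℂ)+s‖^2 := by
      rw [hden]
      exact key_ineq a K s.re ‖w‖ η ha_ne hKeq hsre
        (hwre ▸ Complex.abs_re_le_norm w)
    have hrp : ((1:ℝ)+η^2) ^ (-(1:ℝ)/2) = (Real.sqrt (1+η^2))⁻¹ := by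
      rw [show (-(1:ℝ)/2) = -(1/2) by norm_num, Real.rpow_neg (by positivity),
        ← Real.sqrt_eq_rpow]
    have hgn := norm_nonneg (g η)
    have hS0 : (0:ℝ) < ‖(1:ℂ)+s‖^2 := by positivity
    calc ‖u x η‖^2 ≤ (2*‖g η‖/‖(1:ℂ)+s‖)^2 := by
          apply pow_le_pow_left₀ (norm_nonneg _) hnu
      _ = 4*‖g η‖^2/‖(1:ℂ)+s‖^2 := by rw [div_pow]; congr 1; ring
      _ ≤ C^2*(‖g η‖^2*(1+η^2)^(-(1:ℝ)/2)) := by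
          rw [hrp, hC2, show 4*K*(‖g η‖^2*(Real.sqrt (1+η^2))⁻¹)
            = 4*K*‖g η‖^2/Real.sqrt (1+η^2) by ring, div_le_div_iff₀ hS0 hq0]
          nlinarith [mul_le_mul_of_nonneg_left hkey
            (by positivity : (0:ℝ) ≤ 4*‖g η‖^2)]
  -- integrate
  calc ∫ η : ℝ, ‖u x η‖^2
      ≤ ∫ η : ℝ, C^2 * (‖g η‖^2 * (1+η^2)^(-(1:ℝ)/2)) := by
        apply integral_mono_of_nonneg (ae_of_all _ fun η => sq_nonneg _)
          (hg'.const_mul (C^2)) (ae_of_all _ hpt)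
    _ = C^2 * ∫ η : ℝ, ‖g η‖^2 * (1+η^2)^(-(1:ℝ)/2) := integral_const_mul _ _
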